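/- Let k ≥ 1, p ≥ 1, let φ ∈ ℝ^k satisfy φ_j > 0 for all j, let Σ be diagonal with Σ_jj > 0, and let A be diagonal with A_jj > 0. Define W_eq(w; φ, Σ, A) = ½ − ½·g_{σ(w)}(wᵀφ)²·Σ_j w_j²/A_jj, where σ(w)² = 2·Σ_j Σ_jj w_j², and W*(φ, Σ, A) = sup over D = {w ∈ ℝ^k : w_j ≥ 0 for all j, ‖w‖_p = 1} of W_eq(w; φ, Σ, A). Fix a coordinate j and let Σ[j := t] denote Σ with its j-th diagonal entry replaced by t > 0. Then W*(φ, Σ[j := t], A) tends to ½ (the maximum possible producer welfare) as t → ∞. -/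

import Mathlib

/-- The density of the centered Gaussian `N(0, σ²)`. -/
noncomputable def gauss (σ x : ℝ) : ℝ :=
  (Real.sqrt (2 * Real.pi * σ ^ 2))⁻¹ * Real.exp (-x ^ 2 / (2 * σ ^ 2))

/-- As the variance `Sⱼⱼ` of behavior `j` tends to infinity, the optimal
producer welfare tends to `½`, the maximum possible value. -/
theorem stmt_16 (k : ℕ) (hk : 1 ≤ k) (p : ℝ) (hp : 1 ≤ p)
    (φ S A : Fin k → ℝ) (hφ : ∀ j, 0 < φ j) (hS : ∀ j, 0 < S j) (hA : ∀ j, 0 < A j)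
    (j : Fin k) :
    let pnorm : (Fin k → ℝ) → ℝ := fun w => (∑ i, |w i| ^ p) ^ (1 / p)
    let D : Set (Fin k → ℝ) := {w | (∀ i, 0 ≤ w i) ∧ pnorm w = 1}
    let Weq : (Fin k → ℝ) → (Fin k → ℝ) → ℝ := fun w V =>
      1 / 2 - (1 / 2) * (gauss (Real.sqrt (2 * ∑ i, V i * w i ^ 2)) (∑ i, w i * φ i) ^ 2
        * ∑ i, w i ^ 2 / A i)
    let Wstar : (Fin k → ℝ) → ℝ := fun V => sSup ((fun w => Weq w V) '' D)
    Filter.Tendsto (fun t : ℝ => Wstar (Function.update S j t))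
      Filter.atTop (nhds (1 / 2)) := by
  intro pnorm D Weq Wstar
  have hp0 : p ≠ 0 := by linarith
  -- the indicator weight vector
  set e : Fin k → ℝ := fun i => if i = j then 1 else 0 with he
  have heD : e ∈ D := by
    constructor
    · intro i; simp only [he]; split <;> norm_num
    · simp only [pnorm, he]
      have h1 : ∀ i : Fin k, |if i = j then (1:ℝ) else 0| ^ p = if i = j then 1 else 0 := by
        intro i; split <;> simp [Real.zero_rpow hp0]
      rw [Finset.sum_congr rfl fun i _ => h1 i]
      simp [Finset.sum_ite_eq']
  -- Weq ≤ 1/2 always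
  have hWeq_le : ∀ w V, Weq w V ≤ 1/2 := by
    intro w V
    have h1 : 0 ≤ gauss (Real.sqrt (2 * ∑ i, V i * w i ^ 2)) (∑ i, w i * φ i) ^ 2 *
        ∑ i, w i ^ 2 / A i := by
      apply mul_nonneg (sq_nonneg _)
      exact Finset.sum_nonneg fun i _ => div_nonneg (sq_nonneg _) (hA i).le
    simp only [Weq]
    nlinarith
  have hbdd : ∀ V, BddAbove ((fun w => Weq w V) '' D) := by
    intro V
    exact ⟨1/2, by rintro x ⟨w, _, rfl⟩; exact hWeq_le w V⟩
  -- upper bound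
  have hub : ∀ t : ℝ, Wstar (Function.update S j t) ≤ 1/2 := by
    intro t
    apply Real.sSup_le
    · rintro x ⟨w, _, rfl⟩; exact hWeq_le w _
    · norm_num
  -- lower bound
  have hlb : ∀ t : ℝ, Weq e (Function.update S j t) ≤ Wstar (Function.update S j t) := by
    intro t
    exact le_csSup (hbdd _) (Set.mem_image_of_mem _ heD)
  -- value of Weq e
  have hval : ∀ t : ℝ, Weq e (Function.update S j t)
      = 1/2 - (1/2) * (gauss (Real.sqrt (2 * t)) (φ j) ^ 2 * (1 / A j)) := by
    intro t
    have h1 : (∑ i, Function.update S j t i * e i ^ 2) = t := by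
      rw [Finset.sum_eq_single_of_mem j (Finset.mem_univ j)]
      · simp [he]
      · intro b _ hb; simp [he, hb]
    have h2 : (∑ i, e i * φ i) = φ j := by
      rw [Finset.sum_eq_single_of_mem j (Finset.mem_univ j)]
      · simp [he]
      · intro b _ hb; simp [he, hb]
    have h3 : (∑ i, e i ^ 2 / A i) = 1 / A j := by
      rw [Finset.sum_eq_single_of_mem j (Finset.mem_univ j)]
      · simp [he]
      · intro b _ hb; simp [he, hb]
    simp only [Weq, h1, h2, h3]
  -- limit of gauss
  have hg : Filter.Tendsto (fun t : ℝ => gauss (Real.sqrt (2 * t)) (φ j))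
      Filter.atTop (nhds 0) := by
    have heq : ∀ᶠ t in Filter.atTop, gauss (Real.sqrt (2 * t)) (φ j)
        = (Real.sqrt (2 * Real.pi * (2 * t)))⁻¹ * Real.exp (-(φ j) ^ 2 / (2 * (2 * t))) := by
      filter_upwards [Filter.eventually_gt_atTop (0:ℝ)] with t ht
      unfold gauss
      rw [Real.sq_sqrt (by linarith)]
    rw [Filter.tendsto_congr' heq]
    have h1 : Filter.Tendsto (fun t : ℝ => (Real.sqrt (2 * Real.pi * (2 * t)))⁻¹)
        Filter.atTop (nhds 0) := by
      apply Filter.Tendsto.inv_tendsto_atTop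
      have h4 : Filter.Tendsto (fun t : ℝ => (2 * Real.pi * (2 * t)) ^ (1/2 : ℝ))
          Filter.atTop Filter.atTop :=
        (tendsto_rpow_atTop (by norm_num)).comp
          ((Filter.Tendsto.const_mul_atTop (show (0:ℝ) < 4 * Real.pi by positivity)
            Filter.tendsto_id).congr (fun t => by simp only [id_eq]; ring))
      exact h4.congr fun t => (Real.sqrt_eq_rpow _).symm
    have h2 : Filter.Tendsto (fun t : ℝ => Real.exp (-(φ j) ^ 2 / (2 * (2 * t))))
        Filter.atTop (nhds 1) := by
      have hin : Filter.Tendsto (fun t : ℝ => -(φ j) ^ 2 / (2 * (2 * t)))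
          Filter.atTop (nhds 0) := by
        have : Filter.Tendsto (fun t : ℝ => (-(φ j) ^ 2 / 4) * t⁻¹)
            Filter.atTop (nhds ((-(φ j) ^ 2 / 4) * 0)) :=
          tendsto_inv_atTop_zero.const_mul _
        simpa using this.congr (fun t => by ring)
      have := (Real.continuous_exp.tendsto 0).comp hin
      simpa [Function.comp_def] using this
    have := h1.mul h2
    simpa using this
  -- limit of the lower bound
  have hglim : Filter.Tendsto (fun t : ℝ => Weq e (Function.update S j t))
      Filter.atTop (nhds (1/2)) := by
    simp only [hval]
    have h0 : Filter.Tendsto (fun t : ℝ =>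
        1/2 - (1/2) * (gauss (Real.sqrt (2 * t)) (φ j) ^ 2 * (1 / A j)))
        Filter.atTop (nhds (1/2 - (1/2) * ((0:ℝ) ^ 2 * (1 / A j)))) := by
      exact Filter.Tendsto.const_sub _ (((hg.pow 2).mul_const _).const_mul _)
    simpa using h0
  exact tendsto_of_tendsto_of_tendsto_of_le_of_le hglim tendsto_const_nhds hlb hub
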